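/- Let F be a family of n-element subsets of an m-element universe such that any two distinct members intersect in at most n/2 elements. Then a maximal such family (obtained greedily) has size at least (m/(4n))^{n/2}, for m ≥ n ≥ 2 (n even). More precisely, binom(m,n) / (binom(n,n/2) * binom(m - n/2, n/2)) ≥ (m/(4n))^{n/2}. -/

import Mathlib

lemma pow_mul_descFactorial_le (m n : ℕ) (hmn : n ≤ m) :
    ∀ k, k ≤ n → m ^ k * n.descFactorial k ≤ n ^ k * m.descFactorial k := by
  intro k
  induction k with
  | zero => simp
  | succ k ih =>
    intro hk
    rw [Nat.descFactorial_succ, Nat.descFactorial_succ, pow_succ, pow_succ]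
    have h1 : m * (n - k) ≤ n * (m - k) := by
      have hk' : k ≤ n := Nat.le_of_succ_le hk
      have hk' : k ≤ n := Nat.le_of_succ_le hk
      have h2 : n * k ≤ m * k := Nat.mul_le_mul_right k hmn
      zify [hk', hk'.trans hmn] at *
      nlinarith
    calc m ^ k * m * ((n - k) * n.descFactorial k)
        = (m * (n - k)) * (m ^ k * n.descFactorial k) := by ring
      _ ≤ (n * (m - k)) * (n ^ k * m.descFactorial k) :=
          Nat.mul_le_mul h1 (ih (Nat.le_of_succ_le hk))
      _ = n ^ k * n * ((m - k) * m.descFactorial k) := by ring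

lemma choose_nat_ineq (m n k : ℕ) (hkn : k ≤ n) (hmn : n ≤ m) :
    m ^ k * n.choose k ≤ n ^ k * m.choose k := by
  have h := pow_mul_descFactorial_le m n hmn k hkn
  rw [Nat.descFactorial_eq_factorial_mul_choose, Nat.descFactorial_eq_factorial_mul_choose] at h
  have hf : 0 < k.factorial := Nat.factorial_pos k
  have h' : k.factorial * (m ^ k * n.choose k) ≤ k.factorial * (n ^ k * m.choose k) := by
    have e1 : k.factorial * (m ^ k * n.choose k) = m ^ k * (k.factorial * n.choose k) := by ring
    have e2 : k.factorial * (n ^ k * m.choose k) = n ^ k * (k.factorial * m.choose k) := by ring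
    rw [e1, e2]; exact h
  exact Nat.le_of_mul_le_mul_left h' hf

lemma choose_le_two_pow' (n k : ℕ) (h : k ≤ n) : n.choose k ≤ 2 ^ n := by
  rw [← Nat.sum_range_choose n]
  exact Finset.single_le_sum (fun i _ => Nat.zero_le _)
    (Finset.mem_range.mpr (Nat.lt_succ_of_le h))

theorem greedy_family_size_bound (m n : ℕ) (hn : 2 ≤ n) (hne : Even n) (hmn : n ≤ m) :
    ((m / (4 * n) : ℝ)) ^ (n / 2) ≤
      (m.choose n : ℝ) / ((n.choose (n / 2) : ℝ) * ((m - n / 2).choose (n / 2) : ℝ)) := by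
  set k := n / 2 with hk
  have h2k : 2 * k = n := (Nat.two_mul_div_two_of_even hne)
  have hkn : k ≤ n := Nat.div_le_self n 2
  have hkm : k ≤ m - k := by omega
  -- key identity: C(m,n) * C(n,k) = C(m,k) * C(m-k, n-k) with n - k = k
  have hid : m.choose n * n.choose k = m.choose k * (m - k).choose k := by
    have := Nat.choose_mul (n := m) (k := n) (s := k) hkn
    rwa [show n - k = k by omega] at this
  have hnk_pos : 0 < n.choose k := Nat.choose_pos hkn
  have hmk_pos : 0 < (m - k).choose k := Nat.choose_pos hkm
  have hck_pos : 0 < m.choose k := Nat.choose_pos (le_trans hkn hmn)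
  have hn0 : 0 < n := by omega
  have hm0 : 0 < m := by omega
  -- rewrite RHS as C(m,k) / C(n,k)^2
  have hrhs : (m.choose n : ℝ) / ((n.choose k : ℝ) * ((m - k).choose k : ℝ))
      = (m.choose k : ℝ) / ((n.choose k : ℝ))^2 := by
    have h1 : (m.choose n : ℝ) * (n.choose k : ℝ) = (m.choose k : ℝ) * ((m - k).choose k : ℝ) := by
      exact_mod_cast congrArg (Nat.cast : ℕ → ℝ) hid
    field_simp
    nlinarith [h1]
  rw [hrhs]
  -- main nat inequality: m^k * C(n,k)^2 ≤ C(m,k) * (4n)^k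
  have hnat : m ^ k * (n.choose k) ^ 2 ≤ m.choose k * (4 * n) ^ k := by
    have h4 : n.choose k ≤ 4 ^ k := by
      calc n.choose k ≤ 2 ^ n := choose_le_two_pow' n k hkn
        _ = 4 ^ k := by rw [← h2k, pow_mul]; norm_num
    have h1 : m ^ k * n.choose k ≤ n ^ k * m.choose k := choose_nat_ineq m n k hkn hmn
    calc m ^ k * (n.choose k) ^ 2 = (m ^ k * n.choose k) * n.choose k := by ring
      _ ≤ (n ^ k * m.choose k) * 4 ^ k := Nat.mul_le_mul h1 h4
      _ = m.choose k * (4 * n) ^ k := by rw [mul_pow]; ring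
  have h4n : (0:ℝ) < (4 * n : ℝ) := by positivity
  have hnck : (0:ℝ) < ((n.choose k : ℝ))^2 := by positivity
  rw [div_pow, div_le_div_iff₀ (by positivity) hnck]
  calc (m:ℝ) ^ k * ((n.choose k : ℝ))^2 = ((m ^ k * (n.choose k)^2 : ℕ) : ℝ) := by push_cast; ring
    _ ≤ ((m.choose k * (4 * n) ^ k : ℕ) : ℝ) := by exact_mod_cast hnat
    _ = (m.choose k : ℝ) * ((4 * n : ℝ)) ^ k := by push_cast; ring
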